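/- Commutation identity of evolutionary variations with Euler-Lagrange derivatives: for any local functions f and Q^i, δ_Q(δf/δφ^i) = δ(δ_Q f)/δφ^i − Σ_{(μ)} (-1)^{|μ|} ∂_{(μ)}[(∂Q^j/∂φ^i_{(μ)}) (δf/δφ^j)]. -/

import Mathlib

open MvPolynomial

abbrev JetVar (ι : Type) (n : ℕ) : Type := (ι × Multiset (Fin n)) ⊕ Fin n

abbrev LocalFn (ι : Type) (n : ℕ) : Type := MvPolynomial (JetVar ι n) ℝ

variable {ι : Type} {n : ℕ} [DecidableEq ι]

noncomputable def tD (ν : Fin n) (f : LocalFn ι n) : LocalFn ι n :=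
  pderiv (Sum.inr ν) f +
    ∑ v ∈ f.vars,
      (match v with
      | Sum.inl (i, μ) => X (Sum.inl (i, ν ::ₘ μ)) * pderiv (Sum.inl (i, μ)) f
      | Sum.inr _ => 0 : LocalFn ι n)

noncomputable def tDm (μ : Multiset (Fin n)) (f : LocalFn ι n) : LocalFn ι n :=
  (μ.sort (· ≤ ·)).foldr tD f

noncomputable def EL (i : ι) (f : LocalFn ι n) : LocalFn ι n :=
  ∑ v ∈ f.vars,
    (match v with
    | Sum.inl (j, μ) =>
        if j = i then ((-1 : ℝ) ^ Multiset.card μ) • tDm μ (pderiv (Sum.inl (j, μ)) f)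
        else 0
    | Sum.inr _ => 0 : LocalFn ι n)

noncomputable def evQ (Q : ι → LocalFn ι n) (f : LocalFn ι n) : LocalFn ι n :=
  ∑ v ∈ f.vars,
    (match v with
    | Sum.inl (i, μ) => tDm μ (Q i) * pderiv (Sum.inl (i, μ)) f
    | Sum.inr _ => 0 : LocalFn ι n)

/-- The combination Σ_{j,(μ)} (-1)^{|μ|} ∂_{(μ)}[(∂Q^j/∂φ^i_{(μ)}) g_j]. -/
noncomputable def symTail {ι : Type} {n : ℕ} [DecidableEq ι] [Fintype ι]
    (Q : ι → LocalFn ι n) (g : ι → LocalFn ι n) (i : ι) : LocalFn ι n :=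
  ∑ j : ι, ∑ v ∈ (Q j).vars,
    (match v with
    | Sum.inl (i', μ) =>
        if i' = i then
          ((-1 : ℝ) ^ Multiset.card μ) •
            tDm μ (pderiv (Sum.inl (i', μ) : JetVar ι n) (Q j) * g j)
        else 0
    | Sum.inr _ => 0 : LocalFn ι n)

section Helpers

variable {ι : Type} {n : ℕ} [DecidableEq ι]

open Function Set

/-- Finiteness of supports of families whose terms vanish when a `pderiv` of a fixed
polynomial vanishes. -/
lemma fin_pd {α : Type*} {g : α → JetVar ι n} (hg : Function.Injective g)
    (f : LocalFn ι n) {F : α → LocalFn ι n}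
    (h : ∀ a, pderiv (g a) f = 0 → F a = 0) : (Function.support F).Finite := by
  apply Set.Finite.subset ((f.vars.finite_toSet).preimage hg.injOn)
  intro a ha
  simp only [Set.mem_preimage, Finset.mem_coe]
  by_contra h'
  exact ha (h a (pderiv_eq_zero_of_notMem_vars h'))

lemma inl_pair_injective {i : ι} :
    Function.Injective (fun μ : Multiset (Fin n) => (Sum.inl (i, μ) : JetVar ι n)) := by
  intro a b hab
  simpa using hab

lemma cons_pair_injective {ν : Fin n} :
    Function.Injective (fun q : ι × Multiset (Fin n) => (q.1, ν ::ₘ q.2)) := by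
  intro a b hab
  obtain ⟨h1, h2⟩ := Prod.mk.injEq .. ▸ hab
  exact Prod.ext h1 ((Multiset.cons_inj_right ν).mp h2)

lemma finsum_reindex {M : Type*} [AddCommMonoid M] {α β : Type*} {g : β → α}
    (hg : Function.Injective g) (F : α → M) (h0 : ∀ a, a ∉ Set.range g → F a = 0) :
    ∑ᶠ a, F a = ∑ᶠ b, F (g b) := by
  rw [← finsum_mem_range hg, finsum_mem_def,
    Set.indicator_eq_self.2 (fun a ha => by by_contra h'; exact ha (h0 a h'))]

lemma finsum_swap {α β : Type*} (F : α → β → LocalFn ι n)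
    (hA : ({a | ∃ b, F a b ≠ 0}).Finite) (hB : ({b | ∃ a, F a b ≠ 0}).Finite) :
    ∑ᶠ a, ∑ᶠ b, F a b = ∑ᶠ b, ∑ᶠ a, F a b := by
  classical
  have h1 : ∑ᶠ a, ∑ᶠ b, F a b = ∑ a ∈ hA.toFinset, ∑ b ∈ hB.toFinset, F a b := by
    rw [finsum_eq_finset_sum_of_support_subset]
    · refine Finset.sum_congr rfl fun a _ => ?_
      apply finsum_eq_finset_sum_of_support_subset
      intro b hb
      simp only [Set.Finite.coe_toFinset, Set.mem_setOf_eq]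
      exact ⟨a, hb⟩
    · intro a ha
      simp only [Function.mem_support] at ha
      simp only [Finset.coe_sort_coe, Set.Finite.coe_toFinset, Set.mem_setOf_eq]
      by_contra h'
      push_neg at h'
      exact ha (by rw [finsum_congr h']; exact finsum_zero)
  have h2 : ∑ᶠ b, ∑ᶠ a, F a b = ∑ b ∈ hB.toFinset, ∑ a ∈ hA.toFinset, F a b := by
    rw [finsum_eq_finset_sum_of_support_subset]
    · refine Finset.sum_congr rfl fun b _ => ?_
      apply finsum_eq_finset_sum_of_support_subset
      intro a ha
      simp only [Set.Finite.coe_toFinset, Set.mem_setOf_eq]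
      exact ⟨b, ha⟩
    · intro b hb
      simp only [Function.mem_support] at hb
      simp only [Finset.coe_sort_coe, Set.Finite.coe_toFinset, Set.mem_setOf_eq]
      by_contra h'
      push_neg at h'
      exact hb (by rw [finsum_congr fun a => h' a]; exact finsum_zero)
  rw [h1, h2, Finset.sum_comm]

/-- swap helper specialized to supports controlled by `pderiv`s. -/
lemma finsum_swap_pd {α β : Type*} {gA : α → JetVar ι n} {gB : β → JetVar ι n}
    (hgA : Function.Injective gA) (hgB : Function.Injective gB)
    (fA fB : LocalFn ι n) (F : α → β → LocalFn ι n)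
    (hzA : ∀ a b, pderiv (gA a) fA = 0 → F a b = 0)
    (hzB : ∀ a b, pderiv (gB b) fB = 0 → F a b = 0) :
    ∑ᶠ a, ∑ᶠ b, F a b = ∑ᶠ b, ∑ᶠ a, F a b := by
  apply finsum_swap
  · apply Set.Finite.subset ((fA.vars.finite_toSet).preimage hgA.injOn)
    rintro a ⟨b, hb⟩
    simp only [Set.mem_preimage, Finset.mem_coe]
    by_contra h'
    exact hb (hzA a b (pderiv_eq_zero_of_notMem_vars h'))
  · apply Set.Finite.subset ((fB.vars.finite_toSet).preimage hgB.injOn)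
    rintro b ⟨a, ha⟩
    simp only [Set.mem_preimage, Finset.mem_coe]
    by_contra h'
    exact ha (hzB a b (pderiv_eq_zero_of_notMem_vars h'))

end Helpers

section TDBasic

variable {ι : Type} {n : ℕ} [DecidableEq ι]

/-- Conversion of a `vars`-indexed sum into a `finsum` along an injection. -/
lemma sum_vars_inl {α : Type*} (f : LocalFn ι n) {g : α → JetVar ι n}
    (hg : Function.Injective g) (G : JetVar ι n → LocalFn ι n)
    (h0 : ∀ v ∈ f.vars, v ∉ Set.range g → G v = 0)
    (hz : ∀ a, pderiv (g a) f = 0 → G (g a) = 0) :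
    ∑ v ∈ f.vars, G v = ∑ᶠ a, G (g a) := by
  have h1 : ∑ᶠ a, G (g a) = ∑ a ∈ f.vars.preimage g hg.injOn, G (g a) := by
    apply finsum_eq_finset_sum_of_support_subset
    intro a ha
    simp only [Finset.coe_preimage, Set.mem_preimage, Finset.mem_coe]
    by_contra h'
    exact ha (hz a (pderiv_eq_zero_of_notMem_vars h'))
  rw [h1, Finset.sum_preimage g f.vars hg.injOn G h0]

lemma tD_eq (ν : Fin n) (f : LocalFn ι n) :
    tD ν f = pderiv (Sum.inr ν) f +
      ∑ᶠ p : ι × Multiset (Fin n),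
        X (Sum.inl (p.1, ν ::ₘ p.2)) * pderiv (Sum.inl p) f := by
  rw [tD]
  congr 1
  have h0 : ∀ v ∈ f.vars, v ∉ Set.range (Sum.inl : ι × Multiset (Fin n) → JetVar ι n) →
      (match v with
        | Sum.inl (i, μ) => X (Sum.inl (i, ν ::ₘ μ)) * pderiv (Sum.inl (i, μ)) f
        | Sum.inr _ => (0 : LocalFn ι n)) = 0 := by
    rintro (⟨i, μ⟩ | x) _ hv
    · exact absurd ⟨(i, μ), rfl⟩ hv
    · rfl
  have hz : ∀ p : ι × Multiset (Fin n), pderiv (Sum.inl p) f = 0 →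
      (match (Sum.inl p : JetVar ι n) with
        | Sum.inl (i, μ) => X (Sum.inl (i, ν ::ₘ μ)) * pderiv (Sum.inl (i, μ)) f
        | Sum.inr _ => (0 : LocalFn ι n)) = 0 := by
    rintro ⟨i, μ⟩ h
    show X (Sum.inl (i, ν ::ₘ μ)) * pderiv (Sum.inl (i, μ)) f = 0
    rw [h, mul_zero]
  rw [sum_vars_inl f Sum.inl_injective _ h0 hz]

lemma tD_add (ν : Fin n) (f g : LocalFn ι n) : tD ν (f + g) = tD ν f + tD ν g := by
  rw [tD_eq, tD_eq, tD_eq]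
  have h1 : ∀ p : ι × Multiset (Fin n),
      X (Sum.inl (p.1, ν ::ₘ p.2)) * pderiv (Sum.inl p) (f + g) =
        X (Sum.inl (p.1, ν ::ₘ p.2)) * pderiv (Sum.inl p) f +
          X (Sum.inl (p.1, ν ::ₘ p.2)) * pderiv (Sum.inl p) g := fun p => by
    rw [map_add, mul_add]
  rw [finsum_congr h1,
    finsum_add_distrib (fin_pd Sum.inl_injective f fun p h => by rw [h, mul_zero])
      (fin_pd Sum.inl_injective g fun p h => by rw [h, mul_zero]), map_add]
  ring

lemma tD_smul (ν : Fin n) (c : ℝ) (f : LocalFn ι n) : tD ν (c • f) = c • tD ν f := by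
  rw [tD_eq, tD_eq]
  have h1 : ∀ p : ι × Multiset (Fin n),
      X (Sum.inl (p.1, ν ::ₘ p.2)) * pderiv (Sum.inl p) (c • f) =
        c • (X (Sum.inl (p.1, ν ::ₘ p.2)) * pderiv (Sum.inl p) f) := fun p => by
    rw [Derivation.map_smul, mul_smul_comm]
  rw [finsum_congr h1, ← smul_finsum' c (fin_pd Sum.inl_injective f fun p h => by
    rw [h, mul_zero]), Derivation.map_smul, smul_add]

/-- `tD ν` as a linear map. -/
noncomputable def tDL (ν : Fin n) : LocalFn ι n →ₗ[ℝ] LocalFn ι n :=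
  ⟨⟨tD ν, tD_add ν⟩, tD_smul ν⟩

lemma tD_zero (ν : Fin n) : tD ν (0 : LocalFn ι n) = 0 := map_zero (tDL ν)

lemma tD_finsum {α : Type*} (ν : Fin n) (F : α → LocalFn ι n)
    (hF : (Function.support F).Finite) :
    tD ν (∑ᶠ a, F a) = ∑ᶠ a, tD ν (F a) :=
  (tDL ν).toAddMonoidHom.map_finsum hF

lemma tD_C (ν : Fin n) (a : ℝ) : tD ν (C a : LocalFn ι n) = 0 := by
  rw [tD_eq, pderiv_C, finsum_congr (fun p => by
    rw [(pderiv_C : pderiv (Sum.inl p) (C a : LocalFn ι n) = 0), mul_zero]), finsum_zero, add_zero]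

lemma tD_one (ν : Fin n) : tD ν (1 : LocalFn ι n) = 0 := by
  rw [← C_1, tD_C]

lemma tD_X_inl (ν : Fin n) (p : ι × Multiset (Fin n)) :
    tD ν (X (Sum.inl p) : LocalFn ι n) = X (Sum.inl (p.1, ν ::ₘ p.2)) := by
  rw [tD_eq, pderiv_X_of_ne (by simp), zero_add, finsum_eq_single _ p ?_]
  · rw [pderiv_X_self, mul_one]
  · intro q hq
    rw [pderiv_X_of_ne (fun h => hq (Sum.inl_injective h).symm), mul_zero]

lemma tD_mul (ν : Fin n) (f g : LocalFn ι n) :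
    tD ν (f * g) = tD ν f * g + f * tD ν g := by
  rw [tD_eq, tD_eq, tD_eq]
  have h1 : ∀ p : ι × Multiset (Fin n),
      X (Sum.inl (p.1, ν ::ₘ p.2)) * pderiv (Sum.inl p) (f * g) =
        X (Sum.inl (p.1, ν ::ₘ p.2)) * pderiv (Sum.inl p) f * g +
          f * (X (Sum.inl (p.1, ν ::ₘ p.2)) * pderiv (Sum.inl p) g) := fun p => by
    rw [pderiv_mul]; ring
  rw [finsum_congr h1,
    finsum_add_distrib
      (fin_pd Sum.inl_injective f fun p h => by rw [h, mul_zero, zero_mul])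
      (fin_pd Sum.inl_injective g fun p h => by rw [h, mul_zero, mul_zero]),
    ← finsum_mul' _ g (fin_pd Sum.inl_injective f fun p h => by rw [h, mul_zero]),
    ← mul_finsum' _ f (fin_pd Sum.inl_injective g fun p h => by rw [h, mul_zero]),
    pderiv_mul]
  ring

lemma tD_tD_X (ν ρ : Fin n) (v : JetVar ι n) :
    tD ν (tD ρ (X v : LocalFn ι n)) = tD ρ (tD ν (X v)) := by
  rcases v with p | x
  · rw [tD_X_inl, tD_X_inl, tD_X_inl, tD_X_inl]
    show (X (Sum.inl (p.1, ν ::ₘ ρ ::ₘ p.2)) : LocalFn ι n) = X (Sum.inl (p.1, ρ ::ₘ ν ::ₘ p.2))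
    rw [Multiset.cons_swap]
  · have h : ∀ τ : Fin n, tD τ (X (Sum.inr x) : LocalFn ι n) =
        if (Sum.inr x : JetVar ι n) = Sum.inr τ then 1 else 0 := by
      intro τ
      rw [tD_eq, pderiv_X, Pi.single_apply, finsum_congr (fun p => by
        rw [pderiv_X_of_ne (by simp), mul_zero]), finsum_zero, add_zero]
    rw [h, h]
    by_cases hν : (Sum.inr x : JetVar ι n) = Sum.inr ν
    · by_cases hρ : (Sum.inr x : JetVar ι n) = Sum.inr ρ
      · rw [if_pos hν, if_pos hρ, tD_one, tD_one]
      · rw [if_pos hν, if_neg hρ, tD_one, tD_zero]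
    · by_cases hρ : (Sum.inr x : JetVar ι n) = Sum.inr ρ
      · rw [if_neg hν, if_pos hρ, tD_zero, tD_one]
      · rw [if_neg hν, if_neg hρ, tD_zero, tD_zero]

lemma tD_comm (ν ρ : Fin n) (f : LocalFn ι n) : tD ν (tD ρ f) = tD ρ (tD ν f) := by
  induction f using MvPolynomial.induction_on with
  | C a => rw [tD_C, tD_C, tD_zero, tD_zero]
  | add p q hp hq => rw [tD_add, tD_add, tD_add, tD_add, hp, hq]
  | mul_X p v hp =>
      rw [tD_mul, tD_add, tD_mul, tD_mul, tD_mul, tD_add, tD_mul, tD_mul, hp, tD_tD_X]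
      ring

instance : LeftCommutative (tD : Fin n → LocalFn ι n → LocalFn ι n) :=
  ⟨fun ν ρ f => tD_comm ν ρ f⟩

end TDBasic

section TDmPd

variable {ι : Type} {n : ℕ} [DecidableEq ι]

lemma pd_finsum {ι : Type} {n : ℕ} [DecidableEq ι] {α : Type*} (v : JetVar ι n)
    (F : α → LocalFn ι n) (hF : (Function.support F).Finite) :
    pderiv v (∑ᶠ a, F a) = ∑ᶠ a, pderiv v (F a) :=
  ((pderiv v : Derivation ℝ (LocalFn ι n) (LocalFn ι n)).toLinearMap.toAddMonoidHom).map_finsum hF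

lemma pd_comm (u v : JetVar ι n) (f : LocalFn ι n) :
    pderiv u (pderiv v f) = pderiv v (pderiv u f) := by
  by_cases huv : u = v
  · rw [huv]
  induction f using MvPolynomial.induction_on' with
  | monomial s a =>
      rw [pderiv_monomial, pderiv_monomial, pderiv_monomial, pderiv_monomial]
      have h1 : (s - Finsupp.single v 1 : JetVar ι n →₀ ℕ) u = s u := by
        rw [Finsupp.tsub_apply, Finsupp.single_eq_of_ne' (Ne.symm huv), tsub_zero]
      have h2 : (s - Finsupp.single u 1 : JetVar ι n →₀ ℕ) v = s v := by
        rw [Finsupp.tsub_apply, Finsupp.single_eq_of_ne' huv, tsub_zero]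
      rw [h1, h2, tsub_right_comm, mul_right_comm]
  | add p q hp hq => simp only [map_add, hp, hq]

lemma tDm_zero_idx (f : LocalFn ι n) : tDm (0 : Multiset (Fin n)) f = f := by
  rw [tDm, Multiset.sort_zero]
  rfl

lemma tDm_cons (ν : Fin n) (μ : Multiset (Fin n)) (f : LocalFn ι n) :
    tDm (ν ::ₘ μ) f = tD ν (tDm μ f) := by
  rw [tDm, tDm]
  have hp : ((ν ::ₘ μ).sort (· ≤ ·)).Perm (ν :: μ.sort (· ≤ ·)) := by
    rw [← Multiset.coe_eq_coe, Multiset.sort_eq, ← Multiset.cons_coe, Multiset.sort_eq]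
  exact hp.foldr_eq f

lemma tDm_zero (μ : Multiset (Fin n)) : tDm μ (0 : LocalFn ι n) = 0 := by
  induction μ using Multiset.induction_on with
  | empty => exact tDm_zero_idx 0
  | cons ν μ ih => rw [tDm_cons, ih, tD_zero]

lemma tDm_add (μ : Multiset (Fin n)) (f g : LocalFn ι n) :
    tDm μ (f + g) = tDm μ f + tDm μ g := by
  induction μ using Multiset.induction_on with
  | empty => rw [tDm_zero_idx, tDm_zero_idx, tDm_zero_idx]
  | cons ν μ ih => rw [tDm_cons, tDm_cons, tDm_cons, ih, tD_add]

lemma tDm_smul (μ : Multiset (Fin n)) (c : ℝ) (f : LocalFn ι n) :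
    tDm μ (c • f) = c • tDm μ f := by
  induction μ using Multiset.induction_on with
  | empty => rw [tDm_zero_idx, tDm_zero_idx]
  | cons ν μ ih => rw [tDm_cons, tDm_cons, ih, tD_smul]

/-- `tDm μ` as a linear map. -/
noncomputable def tDmL (μ : Multiset (Fin n)) : LocalFn ι n →ₗ[ℝ] LocalFn ι n :=
  ⟨⟨tDm μ, tDm_add μ⟩, tDm_smul μ⟩

lemma tDm_finsum {α : Type*} (μ : Multiset (Fin n)) (F : α → LocalFn ι n)
    (hF : (Function.support F).Finite) :
    tDm μ (∑ᶠ a, F a) = ∑ᶠ a, tDm μ (F a) :=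
  (tDmL μ).toAddMonoidHom.map_finsum hF

lemma tDm_tD (μ : Multiset (Fin n)) (ν : Fin n) (f : LocalFn ι n) :
    tDm μ (tD ν f) = tD ν (tDm μ f) := by
  induction μ using Multiset.induction_on with
  | empty => rw [tDm_zero_idx, tDm_zero_idx]
  | cons ρ μ ih => rw [tDm_cons, tDm_cons, ih, tD_comm]

lemma pd_inr_tD (ρ ν : Fin n) (f : LocalFn ι n) :
    pderiv (Sum.inr ρ) (tD ν f) = tD ν (pderiv (Sum.inr ρ) f) := by
  rw [tD_eq, map_add,
    pd_finsum (Sum.inr ρ) _ (fin_pd Sum.inl_injective f fun p h => by rw [h, mul_zero]),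
    tD_eq (f := pderiv (Sum.inr ρ) f)]
  congr 1
  · exact pd_comm _ _ f
  · refine finsum_congr fun p => ?_
    show pderiv (Sum.inr ρ) (X (Sum.inl (p.1, ν ::ₘ p.2)) * pderiv (Sum.inl p) f) = _
    rw [pderiv_mul, pderiv_X_of_ne (by simp), zero_mul, zero_add, pd_comm]

lemma pd_inl_tD (r : ι × Multiset (Fin n)) (ν : Fin n) (f : LocalFn ι n) :
    pderiv (Sum.inl r) (tD ν f) =
      tD ν (pderiv (Sum.inl r) f) +
        (if ν ∈ r.2 then pderiv (Sum.inl (r.1, r.2.erase ν)) f else 0) := by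
  rw [tD_eq, map_add,
    pd_finsum (Sum.inl r) _ (fin_pd Sum.inl_injective f fun p h => by rw [h, mul_zero])]
  have hT : ∀ p : ι × Multiset (Fin n),
      pderiv (Sum.inl r) (X (Sum.inl (p.1, ν ::ₘ p.2)) * pderiv (Sum.inl p) f) =
        (if (p.1, ν ::ₘ p.2) = r then pderiv (Sum.inl p) f else 0) +
          X (Sum.inl (p.1, ν ::ₘ p.2)) * pderiv (Sum.inl p) (pderiv (Sum.inl r) f) := by
    intro p
    rw [pderiv_mul, pd_comm]
    congr 1
    by_cases hp : (p.1, ν ::ₘ p.2) = r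
    · rw [if_pos hp]
      have : (Sum.inl (p.1, ν ::ₘ p.2) : JetVar ι n) = Sum.inl r := by rw [hp]
      rw [this, pderiv_X_self, one_mul]
    · rw [if_neg hp, pderiv_X_of_ne (fun h => hp (Sum.inl_injective h)), zero_mul]
  rw [finsum_congr hT,
    finsum_add_distrib
      (fin_pd Sum.inl_injective f fun p h => by rw [h, ite_self])
      (fin_pd Sum.inl_injective (pderiv (Sum.inl r) f) fun p h => by rw [h, mul_zero])]
  have hITE : ∑ᶠ p : ι × Multiset (Fin n),
      (if (p.1, ν ::ₘ p.2) = r then pderiv (Sum.inl p) f else 0) =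
        (if ν ∈ r.2 then pderiv (Sum.inl (r.1, r.2.erase ν)) f else 0) := by
    by_cases hν : ν ∈ r.2
    · rw [if_pos hν, finsum_eq_single _ (r.1, r.2.erase ν) ?_]
      · rw [if_pos (show ((r.1, r.2.erase ν).1, ν ::ₘ (r.1, r.2.erase ν).2) = r from
            Prod.ext rfl (Multiset.cons_erase hν))]
      · intro q hq
        rw [if_neg]
        intro h
        apply hq
        have h2 : ν ::ₘ q.2 = r.2 := by rw [← h]
        have h1 : q.1 = r.1 := by rw [← h]
        exact Prod.ext h1 (by rw [← h2, Multiset.erase_cons_head] :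
          q.2 = (r.1, r.2.erase ν).2)
    · rw [if_neg hν, finsum_congr (fun q => ?_), finsum_zero]
      rw [if_neg]
      intro h
      apply hν
      have h2 : ν ::ₘ q.2 = r.2 := by rw [← h]
      rw [← h2]
      exact Multiset.mem_cons_self ν q.2
  rw [hITE, tD_eq (f := pderiv (Sum.inl r) f), pd_comm]
  ring

lemma tDm_mul_tD (κ : Multiset (Fin n)) (ν : Fin n) (f : LocalFn ι n) :
    tDm κ (tD ν f) = tDm (ν ::ₘ κ) f := by
  rw [tDm_cons, tDm_tD]

end TDmPd

section EvQEL

variable {ι : Type} {n : ℕ} [DecidableEq ι]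

lemma fin_of_image {α β : Type*} (g : β → α) {s : Set β} (hs : s.Finite)
    (F : α → LocalFn ι n) (h : ∀ a, F a ≠ 0 → ∃ b ∈ s, g b = a) :
    (Function.support F).Finite := by
  apply Set.Finite.subset (hs.image g)
  intro a ha
  obtain ⟨b, hb, rfl⟩ := h a ha
  exact Set.mem_image_of_mem g hb

lemma fin_vars_pre {α : Type*} {g : α → JetVar ι n} (hg : Function.Injective g)
    (f : LocalFn ι n) : {a | pderiv (g a) f ≠ 0}.Finite := by
  apply Set.Finite.subset ((f.vars.finite_toSet).preimage hg.injOn)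
  intro a ha
  simp only [Set.mem_preimage, Finset.mem_coe]
  by_contra h'
  exact ha (pderiv_eq_zero_of_notMem_vars h')

lemma evQ_eq (Q : ι → LocalFn ι n) (f : LocalFn ι n) :
    evQ Q f = ∑ᶠ p : ι × Multiset (Fin n), tDm p.2 (Q p.1) * pderiv (Sum.inl p) f := by
  rw [evQ]
  have h0 : ∀ v ∈ f.vars, v ∉ Set.range (Sum.inl : ι × Multiset (Fin n) → JetVar ι n) →
      (match v with
        | Sum.inl (i, μ) => tDm μ (Q i) * pderiv (Sum.inl (i, μ)) f
        | Sum.inr _ => (0 : LocalFn ι n)) = 0 := by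
    rintro (⟨i, μ⟩ | x) _ hv
    · exact absurd ⟨(i, μ), rfl⟩ hv
    · rfl
  have hz : ∀ p : ι × Multiset (Fin n), pderiv (Sum.inl p) f = 0 →
      (match (Sum.inl p : JetVar ι n) with
        | Sum.inl (i, μ) => tDm μ (Q i) * pderiv (Sum.inl (i, μ)) f
        | Sum.inr _ => (0 : LocalFn ι n)) = 0 := by
    rintro ⟨i, μ⟩ h
    show tDm μ (Q i) * pderiv (Sum.inl (i, μ)) f = 0
    rw [h, mul_zero]
  rw [sum_vars_inl f Sum.inl_injective _ h0 hz]

lemma evQ_add (Q : ι → LocalFn ι n) (f g : LocalFn ι n) :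
    evQ Q (f + g) = evQ Q f + evQ Q g := by
  rw [evQ_eq, evQ_eq, evQ_eq,
    finsum_congr (fun p : ι × Multiset (Fin n) => by rw [map_add, mul_add]),
    finsum_add_distrib (fin_pd Sum.inl_injective f fun p h => by rw [h, mul_zero])
      (fin_pd Sum.inl_injective g fun p h => by rw [h, mul_zero])]

lemma evQ_smul (Q : ι → LocalFn ι n) (c : ℝ) (f : LocalFn ι n) :
    evQ Q (c • f) = c • evQ Q f := by
  rw [evQ_eq, evQ_eq,
    finsum_congr (fun p : ι × Multiset (Fin n) => by
      rw [Derivation.map_smul, mul_smul_comm]),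
    ← smul_finsum' c (fin_pd Sum.inl_injective f fun p h => by rw [h, mul_zero])]

/-- `evQ Q` as a linear map. -/
noncomputable def evQL (Q : ι → LocalFn ι n) : LocalFn ι n →ₗ[ℝ] LocalFn ι n :=
  ⟨⟨evQ Q, evQ_add Q⟩, evQ_smul Q⟩

lemma evQ_zero (Q : ι → LocalFn ι n) : evQ Q (0 : LocalFn ι n) = 0 := map_zero (evQL Q)

lemma evQ_finsum {α : Type*} (Q : ι → LocalFn ι n) (F : α → LocalFn ι n)
    (hF : (Function.support F).Finite) :
    evQ Q (∑ᶠ a, F a) = ∑ᶠ a, evQ Q (F a) :=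
  (evQL Q).toAddMonoidHom.map_finsum hF

lemma evQ_tD (Q : ι → LocalFn ι n) (ν : Fin n) (f : LocalFn ι n) :
    evQ Q (tD ν f) = tD ν (evQ Q f) := by
  rw [evQ_eq, evQ_eq,
    tD_finsum ν _ (fin_pd Sum.inl_injective f fun p h => by rw [h, mul_zero])]
  have hL : ∀ p : ι × Multiset (Fin n),
      tDm p.2 (Q p.1) * pderiv (Sum.inl p) (tD ν f) =
        tDm p.2 (Q p.1) * tD ν (pderiv (Sum.inl p) f) +
          tDm p.2 (Q p.1) *
            (if ν ∈ p.2 then pderiv (Sum.inl (p.1, p.2.erase ν)) f else 0) := fun p => by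
    rw [pd_inl_tD, mul_add]
  have hR : ∀ p : ι × Multiset (Fin n),
      tD ν (tDm p.2 (Q p.1) * pderiv (Sum.inl p) f) =
        tDm p.2 (Q p.1) * tD ν (pderiv (Sum.inl p) f) +
          tD ν (tDm p.2 (Q p.1)) * pderiv (Sum.inl p) f := fun p => by
    rw [tD_mul]; ring
  have hAfin : (Function.support fun p : ι × Multiset (Fin n) =>
      tDm p.2 (Q p.1) * tD ν (pderiv (Sum.inl p) f)).Finite :=
    fin_pd Sum.inl_injective f fun p h => by rw [h, tD_zero, mul_zero]
  have hBfin : (Function.support fun p : ι × Multiset (Fin n) =>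
      tDm p.2 (Q p.1) *
        (if ν ∈ p.2 then pderiv (Sum.inl (p.1, p.2.erase ν)) f else 0)).Finite := by
    apply fin_of_image (fun q : ι × Multiset (Fin n) => (q.1, ν ::ₘ q.2))
      (fin_vars_pre Sum.inl_injective f)
    intro p hp
    by_cases hν : ν ∈ p.2
    · refine ⟨(p.1, p.2.erase ν), ?_, Prod.ext rfl (Multiset.cons_erase hν)⟩
      intro h0
      exact hp (by rw [if_pos hν, h0, mul_zero])
    · exact absurd (by rw [if_neg hν, mul_zero]) hp
  have hCfin : (Function.support fun p : ι × Multiset (Fin n) =>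
      tD ν (tDm p.2 (Q p.1)) * pderiv (Sum.inl p) f).Finite :=
    fin_pd Sum.inl_injective f fun p h => by rw [h, mul_zero]
  rw [finsum_congr hL, finsum_congr hR, finsum_add_distrib hAfin hBfin,
    finsum_add_distrib hAfin hCfin]
  congr 1
  rw [finsum_reindex cons_pair_injective _ ?hout]
  case hout =>
    intro p hp
    by_cases hν : ν ∈ p.2
    · exact absurd ⟨(p.1, p.2.erase ν), Prod.ext rfl (Multiset.cons_erase hν)⟩ hp
    · rw [if_neg hν, mul_zero]
  refine finsum_congr fun q => ?_
  show tDm (ν ::ₘ q.2) (Q q.1) *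
      (if ν ∈ ν ::ₘ q.2 then pderiv (Sum.inl (q.1, (ν ::ₘ q.2).erase ν)) f else 0) = _
  rw [if_pos (Multiset.mem_cons_self ν q.2), Multiset.erase_cons_head, tDm_cons]

lemma evQ_tDm (Q : ι → LocalFn ι n) (μ : Multiset (Fin n)) (f : LocalFn ι n) :
    evQ Q (tDm μ f) = tDm μ (evQ Q f) := by
  induction μ using Multiset.induction_on with
  | empty => rw [tDm_zero_idx, tDm_zero_idx]
  | cons ν μ ih => rw [tDm_cons, tDm_cons, evQ_tD, ih]

lemma pd_evQ (r : ι × Multiset (Fin n)) (Q : ι → LocalFn ι n) (f : LocalFn ι n) :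
    pderiv (Sum.inl r) (evQ Q f) =
      evQ Q (pderiv (Sum.inl r) f) +
        ∑ᶠ p : ι × Multiset (Fin n),
          pderiv (Sum.inl r) (tDm p.2 (Q p.1)) * pderiv (Sum.inl p) f := by
  rw [evQ_eq, pd_finsum _ _ (fin_pd Sum.inl_injective f fun p h => by rw [h, mul_zero]),
    evQ_eq (f := pderiv (Sum.inl r) f),
    finsum_congr (fun p : ι × Multiset (Fin n) => by
      rw [pderiv_mul, pd_comm (Sum.inl r) (Sum.inl p) f] :
      ∀ p : ι × Multiset (Fin n),
        pderiv (Sum.inl r) (tDm p.2 (Q p.1) * pderiv (Sum.inl p) f) =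
          pderiv (Sum.inl r) (tDm p.2 (Q p.1)) * pderiv (Sum.inl p) f +
            tDm p.2 (Q p.1) * pderiv (Sum.inl p) (pderiv (Sum.inl r) f)),
    finsum_add_distrib (fin_pd Sum.inl_injective f fun p h => by rw [h, mul_zero])
      (fin_pd Sum.inl_injective (pderiv (Sum.inl r) f) fun p h => by rw [h, mul_zero])]
  ring

lemma EL_eq (i : ι) (f : LocalFn ι n) :
    EL i f = ∑ᶠ μ : Multiset (Fin n),
      ((-1 : ℝ) ^ Multiset.card μ) • tDm μ (pderiv (Sum.inl (i, μ)) f) := by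
  rw [EL]
  have h0 : ∀ v ∈ f.vars,
      v ∉ Set.range (fun μ : Multiset (Fin n) => (Sum.inl (i, μ) : JetVar ι n)) →
      (match v with
        | Sum.inl (j, μ) =>
            if j = i then ((-1 : ℝ) ^ Multiset.card μ) • tDm μ (pderiv (Sum.inl (j, μ)) f)
            else 0
        | Sum.inr _ => (0 : LocalFn ι n)) = 0 := by
    rintro (⟨j, μ⟩ | x) _ hv
    · show (if j = i then _ else 0) = 0
      rw [if_neg]
      intro hj
      exact hv ⟨μ, by rw [hj]⟩
    · rfl
  have hz : ∀ μ : Multiset (Fin n), pderiv (Sum.inl (i, μ)) f = 0 →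
      (match (Sum.inl (i, μ) : JetVar ι n) with
        | Sum.inl (j, μ) =>
            if j = i then ((-1 : ℝ) ^ Multiset.card μ) • tDm μ (pderiv (Sum.inl (j, μ)) f)
            else 0
        | Sum.inr _ => (0 : LocalFn ι n)) = 0 := by
    intro μ h
    show (if i = i then ((-1 : ℝ) ^ Multiset.card μ) •
      tDm μ (pderiv (Sum.inl (i, μ)) f) else 0) = 0
    rw [if_pos rfl, h, tDm_zero, smul_zero]
  rw [sum_vars_inl f inl_pair_injective _ h0 hz]
  refine finsum_congr fun μ => ?_
  show (if i = i then ((-1 : ℝ) ^ Multiset.card μ) •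
    tDm μ (pderiv (Sum.inl (i, μ)) f) else 0) = _
  rw [if_pos rfl]

lemma symTail_eq [Fintype ι] (Q g : ι → LocalFn ι n) (i : ι) :
    symTail Q g i = ∑ j : ι, ∑ᶠ μ : Multiset (Fin n),
      ((-1 : ℝ) ^ Multiset.card μ) • tDm μ (pderiv (Sum.inl (i, μ)) (Q j) * g j) := by
  rw [symTail]
  refine Finset.sum_congr rfl fun j _ => ?_
  have h0 : ∀ v ∈ (Q j).vars,
      v ∉ Set.range (fun μ : Multiset (Fin n) => (Sum.inl (i, μ) : JetVar ι n)) →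
      (match v with
        | Sum.inl (i', μ) =>
            if i' = i then ((-1 : ℝ) ^ Multiset.card μ) •
              tDm μ (pderiv (Sum.inl (i', μ) : JetVar ι n) (Q j) * g j)
            else 0
        | Sum.inr _ => (0 : LocalFn ι n)) = 0 := by
    rintro (⟨i', μ⟩ | x) _ hv
    · show (if i' = i then _ else 0) = 0
      rw [if_neg]
      intro hj
      exact hv ⟨μ, by rw [hj]⟩
    · rfl
  have hz : ∀ μ : Multiset (Fin n), pderiv (Sum.inl (i, μ)) (Q j) = 0 →
      (match (Sum.inl (i, μ) : JetVar ι n) with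
        | Sum.inl (i', μ) =>
            if i' = i then ((-1 : ℝ) ^ Multiset.card μ) •
              tDm μ (pderiv (Sum.inl (i', μ) : JetVar ι n) (Q j) * g j)
            else 0
        | Sum.inr _ => (0 : LocalFn ι n)) = 0 := by
    intro μ h
    show (if i = i then ((-1 : ℝ) ^ Multiset.card μ) •
      tDm μ (pderiv (Sum.inl (i, μ) : JetVar ι n) (Q j) * g j) else 0) = 0
    rw [if_pos rfl, h, zero_mul, tDm_zero, smul_zero]
  rw [sum_vars_inl (Q j) inl_pair_injective _ h0 hz]
  refine finsum_congr fun μ => ?_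
  show (if i = i then ((-1 : ℝ) ^ Multiset.card μ) •
    tDm μ (pderiv (Sum.inl (i, μ) : JetVar ι n) (Q j) * g j) else 0) = _
  rw [if_pos rfl]

end EvQEL

section Key

variable {ι : Type} {n : ℕ} [DecidableEq ι]

lemma mcons_injective (ν : Fin n) :
    Function.Injective (fun lam : Multiset (Fin n) => ν ::ₘ lam) := fun _ _ h =>
  (Multiset.cons_inj_right ν).mp h

lemma tDm_sub (μ : Multiset (Fin n)) (f g : LocalFn ι n) :
    tDm μ (f - g) = tDm μ f - tDm μ g := map_sub (tDmL μ) f g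

/-- The key adjoint identity, proved by induction on the multi-index `κ`. -/
lemma key (i : ι) (a : LocalFn ι n) (κ : Multiset (Fin n)) (h : LocalFn ι n) :
    ∑ᶠ μ : Multiset (Fin n), ((-1 : ℝ) ^ Multiset.card μ) •
        tDm μ (pderiv (Sum.inl (i, μ)) (tDm κ a) * h) =
      ((-1 : ℝ) ^ Multiset.card κ) •
        ∑ᶠ μ : Multiset (Fin n), ((-1 : ℝ) ^ Multiset.card μ) •
          tDm μ (pderiv (Sum.inl (i, μ)) a * tDm κ h) := by
  induction κ using Multiset.induction_on generalizing h with
  | empty => simp only [tDm_zero_idx, Multiset.card_zero, pow_zero, one_smul]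
  | cons ν κ ih =>
    set b := tDm κ a with hb
    have hsplit : ∀ μ : Multiset (Fin n),
        ((-1 : ℝ) ^ Multiset.card μ) •
            tDm μ (pderiv (Sum.inl (i, μ)) (tDm (ν ::ₘ κ) a) * h) =
          ((-1 : ℝ) ^ Multiset.card μ) • tDm μ (tD ν (pderiv (Sum.inl (i, μ)) b) * h) +
            ((-1 : ℝ) ^ Multiset.card μ) •
              tDm μ ((if ν ∈ μ then pderiv (Sum.inl (i, μ.erase ν)) b else 0) * h) := by
      intro μ
      rw [tDm_cons ν κ a, ← hb, pd_inl_tD (i, μ) ν b, add_mul, tDm_add, smul_add]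
    have hT1 : (Function.support fun μ : Multiset (Fin n) =>
        ((-1 : ℝ) ^ Multiset.card μ) •
          tDm μ (tD ν (pderiv (Sum.inl (i, μ)) b) * h)).Finite :=
      fin_pd inl_pair_injective b fun μ h0 => by
        rw [h0, tD_zero, zero_mul, tDm_zero, smul_zero]
    have hT2 : (Function.support fun μ : Multiset (Fin n) =>
        ((-1 : ℝ) ^ Multiset.card μ) •
          tDm μ ((if ν ∈ μ then pderiv (Sum.inl (i, μ.erase ν)) b else 0) * h)).Finite := by
      apply fin_of_image (fun lam : Multiset (Fin n) => ν ::ₘ lam)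
        (fin_vars_pre inl_pair_injective b)
      intro μ hμ
      by_cases hν : ν ∈ μ
      · refine ⟨μ.erase ν, ?_, Multiset.cons_erase hν⟩
        intro h0
        exact hμ (by rw [if_pos hν, h0, zero_mul, tDm_zero, smul_zero])
      · exact absurd (by rw [if_neg hν, zero_mul, tDm_zero, smul_zero]) hμ
    rw [finsum_congr hsplit, finsum_add_distrib hT1 hT2]
    have e2 : ∀ μ : Multiset (Fin n),
        ((-1 : ℝ) ^ Multiset.card μ) • tDm μ (tD ν (pderiv (Sum.inl (i, μ)) b) * h) =
          ((-1 : ℝ) ^ Multiset.card μ) • tD ν (tDm μ (pderiv (Sum.inl (i, μ)) b * h)) -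
            ((-1 : ℝ) ^ Multiset.card μ) •
              tDm μ (pderiv (Sum.inl (i, μ)) b * tD ν h) := by
      intro μ
      have hmul : tD ν (pderiv (Sum.inl (i, μ)) b) * h =
          tD ν (pderiv (Sum.inl (i, μ)) b * h) - pderiv (Sum.inl (i, μ)) b * tD ν h := by
        rw [tD_mul]; ring
      rw [hmul, tDm_sub, smul_sub, tDm_tD]
    have hA : (Function.support fun μ : Multiset (Fin n) =>
        ((-1 : ℝ) ^ Multiset.card μ) •
          tD ν (tDm μ (pderiv (Sum.inl (i, μ)) b * h))).Finite :=
      fin_pd inl_pair_injective b fun μ h0 => by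
        rw [h0, zero_mul, tDm_zero, tD_zero, smul_zero]
    have hB : (Function.support fun μ : Multiset (Fin n) =>
        ((-1 : ℝ) ^ Multiset.card μ) •
          tDm μ (pderiv (Sum.inl (i, μ)) b * tD ν h)).Finite :=
      fin_pd inl_pair_injective b fun μ h0 => by rw [h0, zero_mul, tDm_zero, smul_zero]
    rw [finsum_congr e2, finsum_sub_distrib hA hB]
    have e3 : ∑ᶠ μ : Multiset (Fin n), ((-1 : ℝ) ^ Multiset.card μ) •
          tDm μ ((if ν ∈ μ then pderiv (Sum.inl (i, μ.erase ν)) b else 0) * h) =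
        -∑ᶠ μ : Multiset (Fin n), ((-1 : ℝ) ^ Multiset.card μ) •
          tD ν (tDm μ (pderiv (Sum.inl (i, μ)) b * h)) := by
      rw [finsum_reindex (mcons_injective ν) _ ?hout]
      case hout =>
        intro μ hμ
        by_cases hν : ν ∈ μ
        · exact absurd ⟨μ.erase ν, Multiset.cons_erase hν⟩ hμ
        · rw [if_neg hν, zero_mul, tDm_zero, smul_zero]
      rw [← finsum_neg_distrib]
      refine finsum_congr fun lam => ?_
      show ((-1 : ℝ) ^ Multiset.card (ν ::ₘ lam)) •
          tDm (ν ::ₘ lam) ((if ν ∈ ν ::ₘ lam then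
            pderiv (Sum.inl (i, (ν ::ₘ lam).erase ν)) b else 0) * h) = _
      rw [if_pos (Multiset.mem_cons_self ν lam), Multiset.erase_cons_head, tDm_cons,
        Multiset.card_cons, pow_succ, mul_comm, neg_one_mul, neg_smul]
    rw [e3]
    have e4 : ∑ᶠ μ : Multiset (Fin n), ((-1 : ℝ) ^ Multiset.card μ) •
          tD ν (tDm μ (pderiv (Sum.inl (i, μ)) b * h)) -
        ∑ᶠ μ : Multiset (Fin n), ((-1 : ℝ) ^ Multiset.card μ) •
          tDm μ (pderiv (Sum.inl (i, μ)) b * tD ν h) +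
        -∑ᶠ μ : Multiset (Fin n), ((-1 : ℝ) ^ Multiset.card μ) •
          tD ν (tDm μ (pderiv (Sum.inl (i, μ)) b * h)) =
        -∑ᶠ μ : Multiset (Fin n), ((-1 : ℝ) ^ Multiset.card μ) •
          tDm μ (pderiv (Sum.inl (i, μ)) b * tD ν h) := by
      abel
    rw [e4, hb, ih (tD ν h), tDm_mul_tD κ ν h, Multiset.card_cons, pow_succ, mul_comm,
      neg_one_mul, neg_smul]

end Key

section Assembly

variable {ι : Type} {n : ℕ} [DecidableEq ι]

lemma fin_exists_pd {α β : Type*} {gA : α → JetVar ι n} (hgA : Function.Injective gA)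
    {gB : β → JetVar ι n} (hgB : Function.Injective gB) (fB : LocalFn ι n)
    (G : β → LocalFn ι n) (F : α → β → LocalFn ι n)
    (h1 : ∀ a b, pderiv (gA a) (G b) = 0 → F a b = 0)
    (h2 : ∀ a b, pderiv (gB b) fB = 0 → F a b = 0) :
    {a | ∃ b, F a b ≠ 0}.Finite := by
  have hs : {b | pderiv (gB b) fB ≠ 0}.Finite := fin_vars_pre hgB fB
  apply Set.Finite.subset (hs.biUnion fun b _ => fin_vars_pre hgA (G b))
  rintro a ⟨b, hb⟩
  refine Set.mem_biUnion (show b ∈ {b | pderiv (gB b) fB ≠ 0} from ?_) ?_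
  · intro h0
    exact hb (h2 a b h0)
  · intro h0
    exact hb (h1 a b h0)

end Assembly

theorem evQ_EL_comm' {ι : Type} {n : ℕ} [DecidableEq ι] [Fintype ι]
    (f : LocalFn ι n) (Q : ι → LocalFn ι n) (i : ι) :
    EL i (evQ Q f) = evQ Q (EL i f) + symTail Q (fun j => EL j f) i := by
  classical
  rw [EL_eq i (evQ Q f)]
  have hsplit : ∀ μ : Multiset (Fin n),
      ((-1 : ℝ) ^ Multiset.card μ) • tDm μ (pderiv (Sum.inl (i, μ)) (evQ Q f)) =
        ((-1 : ℝ) ^ Multiset.card μ) • tDm μ (evQ Q (pderiv (Sum.inl (i, μ)) f)) +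
          ((-1 : ℝ) ^ Multiset.card μ) • tDm μ (∑ᶠ p : ι × Multiset (Fin n),
            pderiv (Sum.inl (i, μ)) (tDm p.2 (Q p.1)) * pderiv (Sum.inl p) f) := fun μ => by
    rw [pd_evQ (i, μ) Q f, tDm_add, smul_add]
  have hexfin : {μ : Multiset (Fin n) | ∃ p : ι × Multiset (Fin n),
      pderiv (Sum.inl (i, μ)) (tDm p.2 (Q p.1)) * pderiv (Sum.inl p) f ≠ 0}.Finite := by
    apply fin_exists_pd (gA := fun μ : Multiset (Fin n) => (Sum.inl (i, μ) : JetVar ι n))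
      inl_pair_injective (gB := (Sum.inl : ι × Multiset (Fin n) → JetVar ι n))
      Sum.inl_injective f (fun p : ι × Multiset (Fin n) => tDm p.2 (Q p.1))
    · intro μ p h0
      have h0' : pderiv (Sum.inl (i, μ)) (tDm p.2 (Q p.1)) = 0 := h0
      show pderiv (Sum.inl (i, μ)) (tDm p.2 (Q p.1)) * pderiv (Sum.inl p) f = 0
      rw [h0', zero_mul]
    · intro μ p h0
      show pderiv (Sum.inl (i, μ)) (tDm p.2 (Q p.1)) * pderiv (Sum.inl p) f = 0
      rw [h0, mul_zero]
  have hUfin : (Function.support fun μ : Multiset (Fin n) =>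
      ((-1 : ℝ) ^ Multiset.card μ) • tDm μ (evQ Q (pderiv (Sum.inl (i, μ)) f))).Finite :=
    fin_pd inl_pair_injective f fun μ h0 => by rw [h0, evQ_zero, tDm_zero, smul_zero]
  have hVfin : (Function.support fun μ : Multiset (Fin n) =>
      ((-1 : ℝ) ^ Multiset.card μ) • tDm μ (∑ᶠ p : ι × Multiset (Fin n),
        pderiv (Sum.inl (i, μ)) (tDm p.2 (Q p.1)) * pderiv (Sum.inl p) f)).Finite := by
    apply Set.Finite.subset hexfin
    intro μ hμ
    rw [Set.mem_setOf_eq]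
    by_contra h'
    push_neg at h'
    apply hμ
    show ((-1 : ℝ) ^ Multiset.card μ) • tDm μ _ = 0
    rw [finsum_congr h', finsum_zero, tDm_zero, smul_zero]
  rw [finsum_congr hsplit, finsum_add_distrib hUfin hVfin]
  have hU : ∑ᶠ μ : Multiset (Fin n),
      ((-1 : ℝ) ^ Multiset.card μ) • tDm μ (evQ Q (pderiv (Sum.inl (i, μ)) f)) =
        evQ Q (EL i f) := by
    rw [EL_eq i f, evQ_finsum Q _ (fin_pd inl_pair_injective f fun μ h0 => by
      rw [h0, tDm_zero, smul_zero])]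
    exact finsum_congr fun μ => by rw [evQ_smul, evQ_tDm]
  have hV : ∑ᶠ μ : Multiset (Fin n),
      ((-1 : ℝ) ^ Multiset.card μ) • tDm μ (∑ᶠ p : ι × Multiset (Fin n),
        pderiv (Sum.inl (i, μ)) (tDm p.2 (Q p.1)) * pderiv (Sum.inl p) f) =
      symTail Q (fun j => EL j f) i := by
    have e1 : ∀ μ : Multiset (Fin n),
        ((-1 : ℝ) ^ Multiset.card μ) • tDm μ (∑ᶠ p : ι × Multiset (Fin n),
          pderiv (Sum.inl (i, μ)) (tDm p.2 (Q p.1)) * pderiv (Sum.inl p) f) =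
        ∑ᶠ p : ι × Multiset (Fin n), ((-1 : ℝ) ^ Multiset.card μ) •
          tDm μ (pderiv (Sum.inl (i, μ)) (tDm p.2 (Q p.1)) * pderiv (Sum.inl p) f) := by
      intro μ
      rw [tDm_finsum _ _ (fin_pd Sum.inl_injective f fun p h0 => by rw [h0, mul_zero]),
        smul_finsum' _ (fin_pd Sum.inl_injective f fun p h0 => by
          rw [h0, mul_zero, tDm_zero])]
    rw [finsum_congr e1]
    have e2 : ∑ᶠ (μ : Multiset (Fin n)) (p : ι × Multiset (Fin n)),
        ((-1 : ℝ) ^ Multiset.card μ) •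
          tDm μ (pderiv (Sum.inl (i, μ)) (tDm p.2 (Q p.1)) * pderiv (Sum.inl p) f) =
        ∑ᶠ (p : ι × Multiset (Fin n)) (μ : Multiset (Fin n)),
        ((-1 : ℝ) ^ Multiset.card μ) •
          tDm μ (pderiv (Sum.inl (i, μ)) (tDm p.2 (Q p.1)) * pderiv (Sum.inl p) f) := by
      apply finsum_swap
      · apply Set.Finite.subset hexfin
        rintro μ ⟨p, hp⟩
        refine ⟨p, fun h0 => hp ?_⟩
        rw [h0, tDm_zero, smul_zero]
      · apply Set.Finite.subset (fin_vars_pre Sum.inl_injective f)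
        rintro p ⟨μ, hμ⟩
        intro h0
        apply hμ
        have h0' : pderiv (Sum.inl p) f = 0 := h0
        rw [h0', mul_zero, tDm_zero, smul_zero]
    rw [e2]
    have e3 : ∀ p : ι × Multiset (Fin n),
        (∑ᶠ μ : Multiset (Fin n), ((-1 : ℝ) ^ Multiset.card μ) •
          tDm μ (pderiv (Sum.inl (i, μ)) (tDm p.2 (Q p.1)) * pderiv (Sum.inl p) f)) =
        ((-1 : ℝ) ^ Multiset.card p.2) •
          ∑ᶠ μ : Multiset (Fin n), ((-1 : ℝ) ^ Multiset.card μ) •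
            tDm μ (pderiv (Sum.inl (i, μ)) (Q p.1) * tDm p.2 (pderiv (Sum.inl p) f)) :=
      fun p => key i (Q p.1) p.2 (pderiv (Sum.inl p) f)
    rw [finsum_congr e3]
    have hcurfin : (Function.support fun p : ι × Multiset (Fin n) =>
        ((-1 : ℝ) ^ Multiset.card p.2) •
          ∑ᶠ μ : Multiset (Fin n), ((-1 : ℝ) ^ Multiset.card μ) •
            tDm μ (pderiv (Sum.inl (i, μ)) (Q p.1) *
              tDm p.2 (pderiv (Sum.inl p) f))).Finite := by
      apply fin_pd Sum.inl_injective f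
      intro p h0
      rw [finsum_congr (fun μ => by
        rw [h0, tDm_zero, mul_zero, tDm_zero, smul_zero] :
        ∀ μ : Multiset (Fin n), ((-1 : ℝ) ^ Multiset.card μ) •
          tDm μ (pderiv (Sum.inl (i, μ)) (Q p.1) * tDm p.2 (pderiv (Sum.inl p) f)) = 0),
        finsum_zero, smul_zero]
    rw [finsum_curry _ hcurfin, finsum_eq_sum_of_fintype, symTail_eq]
    refine Finset.sum_congr rfl fun j _ => ?_
    have e4 : ∀ κ : Multiset (Fin n),
        ((-1 : ℝ) ^ Multiset.card (j, κ).2) •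
          ∑ᶠ lam : Multiset (Fin n), ((-1 : ℝ) ^ Multiset.card lam) •
            tDm lam (pderiv (Sum.inl (i, lam)) (Q (j, κ).1) *
              tDm (j, κ).2 (pderiv (Sum.inl (j, κ)) f)) =
        ∑ᶠ lam : Multiset (Fin n), ((-1 : ℝ) ^ Multiset.card lam) •
          tDm lam (pderiv (Sum.inl (i, lam)) (Q j) *
            (((-1 : ℝ) ^ Multiset.card κ) • tDm κ (pderiv (Sum.inl (j, κ)) f))) := by
      intro κ
      rw [smul_finsum' _ (fin_pd inl_pair_injective (Q j) fun lam h0 => by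
        rw [h0, zero_mul, tDm_zero, smul_zero])]
      refine finsum_congr fun lam => ?_
      rw [mul_smul_comm, tDm_smul, smul_comm]
    rw [finsum_congr e4]
    have e5 : ∑ᶠ (κ : Multiset (Fin n)) (lam : Multiset (Fin n)),
        ((-1 : ℝ) ^ Multiset.card lam) •
          tDm lam (pderiv (Sum.inl (i, lam)) (Q j) *
            (((-1 : ℝ) ^ Multiset.card κ) • tDm κ (pderiv (Sum.inl (j, κ)) f))) =
        ∑ᶠ (lam : Multiset (Fin n)) (κ : Multiset (Fin n)),
        ((-1 : ℝ) ^ Multiset.card lam) •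
          tDm lam (pderiv (Sum.inl (i, lam)) (Q j) *
            (((-1 : ℝ) ^ Multiset.card κ) • tDm κ (pderiv (Sum.inl (j, κ)) f))) := by
      apply finsum_swap_pd (inl_pair_injective (i := j)) (inl_pair_injective (i := i)) f (Q j)
      · intro κ lam h0
        have h0' : pderiv (Sum.inl (j, κ)) f = 0 := h0
        show ((-1 : ℝ) ^ Multiset.card lam) • tDm lam (pderiv (Sum.inl (i, lam)) (Q j) *
          (((-1 : ℝ) ^ Multiset.card κ) • tDm κ (pderiv (Sum.inl (j, κ)) f))) = 0
        rw [h0', tDm_zero, smul_zero, mul_zero, tDm_zero, smul_zero]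
      · intro κ lam h0
        have h0' : pderiv (Sum.inl (i, lam)) (Q j) = 0 := h0
        show ((-1 : ℝ) ^ Multiset.card lam) • tDm lam (pderiv (Sum.inl (i, lam)) (Q j) *
          (((-1 : ℝ) ^ Multiset.card κ) • tDm κ (pderiv (Sum.inl (j, κ)) f))) = 0
        rw [h0', zero_mul, tDm_zero, smul_zero]
    rw [e5]
    refine finsum_congr fun lam => ?_
    rw [EL_eq j f,
      mul_finsum' _ _ (fin_pd inl_pair_injective f fun κ h0 => by
        rw [h0, tDm_zero, smul_zero]),
      tDm_finsum _ _ (fin_pd inl_pair_injective f fun κ h0 => by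
        rw [h0, tDm_zero, smul_zero, mul_zero]),
      smul_finsum' _ (fin_pd inl_pair_injective f fun κ h0 => by
        rw [h0, tDm_zero, smul_zero, mul_zero, tDm_zero])]
  rw [hU, hV]

/-- commutation identity of evolutionary variations with Euler-Lagrange
derivatives:
δ_Q(δf/δφ^i) = δ(δ_Q f)/δφ^i − Σ_{(μ)} (-1)^{|μ|} ∂_{(μ)}[(∂Q^j/∂φ^i_{(μ)}) δf/δφ^j]. -/
theorem evQ_EL_comm {ι : Type} {n : ℕ} [DecidableEq ι] [Fintype ι]
    (f : LocalFn ι n) (Q : ι → LocalFn ι n) (i : ι) :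
    evQ Q (EL i f) = EL i (evQ Q f) - symTail Q (fun j => EL j f) i := by
  rw [evQ_EL_comm' f Q i, add_sub_cancel_right]
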